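/- Let a₁, …, a₂ₗ, a₂ₗ₊₁ = a₁ be a closed lightning of pairwise distinct points a₁, …, a₂ₗ lying in the layer z = 0 of ℝ³ (so for each i, aᵢ ≠ aᵢ₊₁, the x-coordinates of aᵢ and aᵢ₊₁ agree for even i and the y-coordinates agree for odd i). Color aᵢ black if i is even and white if i is odd. Let the set {a₁, …, a₂ₗ} be partitioned into pairwise disjoint subsets, each containing equally many black and white points, and let each subset P of the partition be translated by a vector (0, 0, t_P) perpendicular to the layer. Then the resulting set of translated points is not basic. -/

import Mathlib

/-- A set `M ⊆ ℝ³` is *basic* if every real-valued function on `M` decomposes as a sum of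
functions of the three separate coordinates. -/
def IsBasic (M : Set (Fin 3 → ℝ)) : Prop :=
  ∀ f : (Fin 3 → ℝ) → ℝ, ∃ f₁ f₂ f₃ : ℝ → ℝ,
    ∀ p ∈ M, f p = f₁ (p 0) + f₂ (p 1) + f₃ (p 2)


-- telescoping lemma for even-index equalities
lemma sum_alt_even (u : ℕ → ℝ) :
    ∀ l : ℕ, (∀ k, 1 ≤ k → k ≤ l → u (2*k) = u (2*k+1)) →
      ∑ i ∈ Finset.Icc 1 (2*l), (-1:ℝ)^i * u i = u (2*l+1) - u 1 := by
  intro l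
  induction l with
  | zero => simp
  | succ n ih =>
    intro h
    have h2 : 2*(n+1) = (2*n + 1) + 1 := by ring
    rw [h2, Finset.sum_Icc_succ_top (by omega), Finset.sum_Icc_succ_top (by omega),
      ih (fun k hk hk' => h k hk (by omega))]
    have he : u (2*n+1+1) = u (2*n+1+1+1) := by
      rw [show 2*n+1+1 = 2*(n+1) by ring]
      exact h (n+1) (by omega) le_rfl
    have hpow1 : (-1:ℝ)^(2*n+1) = -1 := Odd.neg_one_pow ⟨n, by ring⟩
    have hpow2 : (-1:ℝ)^(2*n+1+1) = 1 := Even.neg_one_pow ⟨n+1, by ring⟩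
    rw [hpow1, hpow2]
    linarith [he]

lemma sum_alt_odd (u : ℕ → ℝ) :
    ∀ l : ℕ, (∀ k, k < l → u (2*k+1) = u (2*k+2)) →
      ∑ i ∈ Finset.Icc 1 (2*l), (-1:ℝ)^i * u i = 0 := by
  intro l
  induction l with
  | zero => simp
  | succ n ih =>
    intro h
    have h2 : 2*(n+1) = (2*n + 1) + 1 := by ring
    rw [h2, Finset.sum_Icc_succ_top (by omega), Finset.sum_Icc_succ_top (by omega),
      ih (fun k hk => h k (by omega))]
    have he : u (2*n+1) = u (2*n+2) := h n (by omega)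
    have hpow1 : (-1:ℝ)^(2*n+1) = -1 := Odd.neg_one_pow ⟨n, by ring⟩
    have hpow2 : (-1:ℝ)^(2*n+1+1) = 1 := Even.neg_one_pow ⟨n+1, by ring⟩
    rw [hpow1, hpow2]
    have e2 : 2*n+1+1 = 2*n+2 := by ring
    rw [e2]
    linarith [he]

/-- Take a closed lightning `a₁, …, a₂ₗ, a₂ₗ₊₁ = a₁` of pairwise distinct points in the
layer `z = 0`, colored black at even indices and white at odd indices.  Partition its
points into parts (the fibers of `σ` on indices), each part containing equally many black
and white points, and translate each part `k` by the vector `(0, 0, t k)` perpendicular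
to the layer.  The resulting set is not basic. -/
theorem lightning_translates_not_basic (l : ℕ) (hl : 1 ≤ l) (a : ℕ → Fin 3 → ℝ)
    (hz : ∀ i ∈ Finset.Icc 1 (2 * l), a i 2 = 0)
    (hclosed : a (2 * l + 1) = a 1)
    (hdistinct : ∀ i ∈ Finset.Icc 1 (2 * l), ∀ j ∈ Finset.Icc 1 (2 * l),
      a i = a j → i = j)
    (hne : ∀ i ∈ Finset.Icc 1 (2 * l), a i ≠ a (i + 1))
    (hx : ∀ i ∈ Finset.Icc 1 (2 * l), Even i → a i 0 = a (i + 1) 0)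
    (hy : ∀ i ∈ Finset.Icc 1 (2 * l), Odd i → a i 1 = a (i + 1) 1)
    (σ : ℕ → ℕ) (t : ℕ → ℝ)
    (hbal : ∀ k : ℕ,
      ((Finset.Icc 1 (2 * l)).filter (fun i => σ i = k ∧ Even i)).card =
      ((Finset.Icc 1 (2 * l)).filter (fun i => σ i = k ∧ Odd i)).card) :
    ¬ IsBasic ((fun i => a i + ![0, 0, t (σ i)]) '' (Set.Icc 1 (2 * l))) := by
  intro hB
  set S := Finset.Icc 1 (2 * l) with hS
  set b : ℕ → Fin 3 → ℝ := fun i => a i + ![0, 0, t (σ i)] with hb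
  have hb0 : ∀ i, b i 0 = a i 0 := by
    intro i
    simp only [hb, Pi.add_apply, Matrix.cons_val_zero, add_zero]
  have hb1 : ∀ i, b i 1 = a i 1 := by
    intro i
    simp only [hb, Pi.add_apply, Matrix.cons_val_one, Matrix.head_cons, Matrix.cons_val_zero, add_zero]
  have hb2 : ∀ i ∈ S, b i 2 = t (σ i) := by
    intro i hi
    simp only [hb, Pi.add_apply, Matrix.cons_val_two, Matrix.tail_cons, Matrix.head_cons]
    rw [hz i hi, zero_add]
  -- injectivity of b on S
  have hbinj : ∀ i ∈ S, ∀ j ∈ S, b i = b j → i = j := by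
    intro i hi j hj hij
    apply hdistinct i hi j hj
    funext x
    fin_cases x
    · show a i 0 = a j 0
      have := congrFun hij 0; rwa [hb0, hb0] at this
    · show a i 1 = a j 1
      have := congrFun hij 1; rwa [hb1, hb1] at this
    · show a i 2 = a j 2
      rw [hz i hi, hz j hj]
  have h2S : 2 ∈ S := by simp [hS]; omega
  -- apply basicness to indicator of b 2
  obtain ⟨f₁, f₂, f₃, hf⟩ := hB (fun p => if p = b 2 then 1 else 0)
  have hmem : ∀ i ∈ S, b i ∈ ((fun i => a i + ![0, 0, t (σ i)]) '' (Set.Icc 1 (2 * l))) := by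
    intro i hi
    exact ⟨i, by simpa [hS, Finset.mem_Icc, Set.mem_Icc] using hi, rfl⟩
  have hdecomp : ∀ i ∈ S, (if b i = b 2 then (1:ℝ) else 0)
      = f₁ (a i 0) + f₂ (a i 1) + f₃ (t (σ i)) := by
    intro i hi
    have := hf (b i) (hmem i hi)
    rwa [hb0, hb1, hb2 i hi] at this
  -- the alternating sum
  have hT1 : ∑ i ∈ S, (-1:ℝ)^i * (if b i = b 2 then (1:ℝ) else 0) = 1 := by
    rw [Finset.sum_eq_single 2]
    · simp
    · intro i hi hne2
      have : b i ≠ b 2 := fun h => hne2 (hbinj i hi 2 h2S h)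
      simp [this]
    · intro h; exact absurd h2S h
  have hA : ∑ i ∈ S, (-1:ℝ)^i * f₁ (a i 0) = 0 := by
    have := sum_alt_even (fun i => f₁ (a i 0)) l (by
      intro k hk hk'
      have hmem : 2*k ∈ S := by simp [hS]; omega
      exact congrArg f₁ (hx (2*k) hmem ⟨k, by ring⟩))
    rw [this]
    simp [hclosed]
  have hB' : ∑ i ∈ S, (-1:ℝ)^i * f₂ (a i 1) = 0 := by
    apply sum_alt_odd (fun i => f₂ (a i 1)) l
    intro k hk
    have hmem : 2*k+1 ∈ S := by simp [hS]; omega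
    have := hy (2*k+1) hmem ⟨k, by ring⟩
    exact congrArg f₂ (by rw [this])
  have hC : ∑ i ∈ S, (-1:ℝ)^i * f₃ (t (σ i)) = 0 := by
    rw [← Finset.sum_fiberwise_of_maps_to (g := σ) (t := S.image σ)
      (fun i hi => Finset.mem_image_of_mem σ hi)]
    apply Finset.sum_eq_zero
    intro k hk
    have : ∀ i ∈ S.filter (fun i => σ i = k), (-1:ℝ)^i * f₃ (t (σ i)) = (-1:ℝ)^i * f₃ (t k) := by
      intro i hi
      rw [(Finset.mem_filter.1 hi).2]
    rw [Finset.sum_congr rfl this, ← Finset.sum_mul]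
    have hsplit : ∑ i ∈ S.filter (fun i => σ i = k), (-1:ℝ)^i = 0 := by
      rw [← Finset.sum_filter_add_sum_filter_not (S.filter (fun i => σ i = k)) Even]
      rw [Finset.filter_filter, Finset.filter_filter]
      have he : ∀ i ∈ S.filter (fun i => σ i = k ∧ Even i), (-1:ℝ)^i = 1 := by
        intro i hi
        exact Even.neg_one_pow (Finset.mem_filter.1 hi).2.2
      have ho : ∀ i ∈ S.filter (fun i => σ i = k ∧ ¬ Even i), (-1:ℝ)^i = -1 := by
        intro i hi
        exact Odd.neg_one_pow (Nat.not_even_iff_odd.1 (Finset.mem_filter.1 hi).2.2)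
      rw [Finset.sum_congr rfl he, Finset.sum_congr rfl ho]
      simp only [Finset.sum_const, nsmul_eq_mul, mul_one, mul_neg_one]
      have hfe : S.filter (fun i => σ i = k ∧ ¬ Even i) = S.filter (fun i => σ i = k ∧ Odd i) := by
        apply Finset.filter_congr
        intro i _
        exact and_congr_right fun _ => Nat.not_even_iff_odd
      rw [hfe, hbal k]
      ring
    rw [hsplit, zero_mul]
  have hT0 : ∑ i ∈ S, (-1:ℝ)^i * (if b i = b 2 then (1:ℝ) else 0) = 0 := by
    rw [Finset.sum_congr rfl (fun i hi => by rw [hdecomp i hi])]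
    simp only [mul_add]
    rw [Finset.sum_add_distrib, Finset.sum_add_distrib, hA, hB', hC]
    ring
  rw [hT1] at hT0
  exact one_ne_zero hT0
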